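/- Let x ∈ ℂ with x ≠ 0. Let V be a 4-dimensional ℂ-vector space and let f be an endomorphism of V whose matrix in some basis of V is diag(J(x,2), J(1,1), J(x⁻²,1)). Then there is a basis of the 6-dimensional space ⋀²V in which the induced endomorphism ⋀²f has matrix diag(J(x,2), J(x⁻¹,2), J(x²,1), J(x⁻²,1)). -/

import Mathlib

/-- The `n × n` Jordan block with eigenvalue `lam`: every diagonal entry is `lam` and every
entry directly above the diagonal is `1`. -/
def jordanBlock (lam : ℂ) (n : ℕ) : Matrix (Fin n) (Fin n) ℂ :=
  Matrix.of fun i j : Fin n =>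
    if (j : ℕ) = (i : ℕ) then lam else if (j : ℕ) = (i : ℕ) + 1 then 1 else 0

/-- The wedge `v ∧ w` as an element of the second exterior power `⋀[ℂ]^2 V`. -/
def wedge {V : Type*} [AddCommGroup V] [Module ℂ V] (v w : V) : ⋀[ℂ]^2 V :=
  ⟨ExteriorAlgebra.ι ℂ v * ExteriorAlgebra.ι ℂ w, by
    show _ ∈ LinearMap.range (ExteriorAlgebra.ι ℂ (M := V)) ^ 2
    rw [pow_two]
    exact Submodule.mul_mem_mul (LinearMap.mem_range_self _ v) (LinearMap.mem_range_self _ w)⟩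

namespace ESJ
open ExteriorAlgebra
variable {V : Type*} [AddCommGroup V] [Module ℂ V]

lemma wedge_val (v w : V) : (wedge v w : ExteriorAlgebra ℂ V) = ι ℂ v * ι ℂ w := rfl

lemma wedge_add_left (u v w : V) : wedge (u + v) w = wedge u w + wedge v w := by
  apply Subtype.ext; simp [wedge, add_mul]

lemma wedge_add_right (u v w : V) : wedge u (v + w) = wedge u v + wedge u w := by
  apply Subtype.ext; simp [wedge, mul_add]

lemma wedge_smul_left (c : ℂ) (v w : V) : wedge (c • v) w = c • wedge v w := by
  apply Subtype.ext; simp [wedge, smul_mul_assoc]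

lemma wedge_smul_right (c : ℂ) (v w : V) : wedge v (c • w) = c • wedge v w := by
  apply Subtype.ext; simp [wedge, mul_smul_comm]

lemma wedge_self (v : V) : wedge v v = 0 := by
  apply Subtype.ext; simp [wedge, ι_sq_zero]

lemma wedge_swap (v w : V) : wedge w v = - wedge v w := by
  apply Subtype.ext
  show ι ℂ w * ι ℂ v = -(ι ℂ v * ι ℂ w)
  exact eq_neg_of_add_eq_zero_left (ι_add_mul_swap w v)

/-- wedge as a bilinear map -/
def W : V →ₗ[ℂ] V →ₗ[ℂ] ⋀[ℂ]^2 V :=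
  LinearMap.mk₂ ℂ wedge wedge_add_left wedge_smul_left wedge_add_right wedge_smul_right

@[simp] lemma W_apply (v w : V) : W v w = wedge v w := rfl

/-- the alternating bilinear form from two functionals -/
def biAlt (α β : Module.Dual ℂ V) : V [⋀^Fin 2]→ₗ[ℂ] ℂ where
  toFun v := α (v 0) * β (v 1) - α (v 1) * β (v 0)
  map_update_add' := by
    intro dec m i x y
    fin_cases i <;> simp [Function.update] <;> ring
  map_update_smul' := by
    intro dec m i c y
    fin_cases i <;> simp [Function.update] <;> ring
  map_eq_zero_of_eq' := by
    intro v i j hij hne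
    fin_cases i <;> fin_cases j <;> simp_all <;> rw [hij] <;> ring

noncomputable def fam (φ : V [⋀^Fin 2]→ₗ[ℂ] ℂ) : ∀ i, V [⋀^Fin i]→ₗ[ℂ] ℂ
  | 2 => φ
  | _ => 0

lemma ιMulti_two (v w : V) : (ιMulti ℂ 2 ![v, w] : ExteriorAlgebra ℂ V) = ι ℂ v * ι ℂ w := by
  simp [ιMulti_apply, List.ofFn_succ]

noncomputable def lam (α β : Module.Dual ℂ V) : (⋀[ℂ]^2 V) →ₗ[ℂ] ℂ :=
  (ExteriorAlgebra.liftAlternating (fam (biAlt α β))).comp (Submodule.subtype _)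

lemma lam_wedge (α β : Module.Dual ℂ V) (v w : V) :
    lam α β (wedge v w) = α v * β w - α w * β v := by
  have h : (wedge v w : ExteriorAlgebra ℂ V) = ιMulti ℂ 2 ![v, w] := (ιMulti_two v w).symm
  show ExteriorAlgebra.liftAlternating (fam (biAlt α β)) (wedge v w : ExteriorAlgebra ℂ V) = _
  rw [h, ExteriorAlgebra.liftAlternating_apply_ιMulti]
  show biAlt α β ![v, w] = _
  simp [biAlt]

lemma jb200 (l : ℂ) : jordanBlock l 2 0 0 = l := by norm_num [jordanBlock]
lemma jb201 (l : ℂ) : jordanBlock l 2 0 1 = 1 := by norm_num [jordanBlock]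
lemma jb210 (l : ℂ) : jordanBlock l 2 1 0 = 0 := by norm_num [jordanBlock]
lemma jb211 (l : ℂ) : jordanBlock l 2 1 1 = l := by norm_num [jordanBlock]
lemma jb100 (l : ℂ) : jordanBlock l 1 0 0 = l := by norm_num [jordanBlock]

end ESJ

set_option maxHeartbeats 2000000 in
open ESJ in
/-- Let `x ∈ ℂ` with `x ≠ 0`. If the matrix of the endomorphism `f` of the 4-dimensional ℂ-vector space `V` in some basis is diag(J(x,2), J(1,1), J(x⁻²,1)), then in some basis of the 6-dimensional space ⋀²V the induced endomorphism ⋀²f (characterized by `v ∧ w ↦ f v ∧ f w`) has matrix diag(J(x,2), J(x⁻¹,2), J(x²,1), J(x⁻²,1)). -/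
theorem exterior_square_jordan_Jx2_J1_Jxm2 (V : Type*) [AddCommGroup V] [Module ℂ V]
    (hdim : Module.finrank ℂ V = 4)
    (x : ℂ) (hx : x ≠ 0)
    (f : V →ₗ[ℂ] V)
    (B : Module.Basis (Fin 2 ⊕ (Fin 1 ⊕ Fin 1)) ℂ V)
    (hB : LinearMap.toMatrix B B f = Matrix.fromBlocks (jordanBlock x 2) 0 0 (Matrix.fromBlocks (jordanBlock 1 1) 0 0 (jordanBlock (x ^ 2)⁻¹ 1)))
    (g : (⋀[ℂ]^2 V) →ₗ[ℂ] (⋀[ℂ]^2 V))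
    (hg : ∀ v w : V, g (wedge v w) = wedge (f v) (f w)) :
    ∃ C : Module.Basis (Fin 2 ⊕ (Fin 2 ⊕ (Fin 1 ⊕ Fin 1))) ℂ (⋀[ℂ]^2 V),
      LinearMap.toMatrix C C g = Matrix.fromBlocks (jordanBlock x 2) 0 0 (Matrix.fromBlocks (jordanBlock x⁻¹ 2) 0 0 (Matrix.fromBlocks (jordanBlock (x ^ 2) 1) 0 0 (jordanBlock (x ^ 2)⁻¹ 1))) := by
  classical
  have hx2 : x ^ 2 ≠ 0 := pow_ne_zero 2 hx
  -- action of f on the basis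
  have hfB : f = Matrix.toLin B B (Matrix.fromBlocks (jordanBlock x 2) 0 0
      (Matrix.fromBlocks (jordanBlock 1 1) 0 0 (jordanBlock (x ^ 2)⁻¹ 1))) := by
    rw [← hB, Matrix.toLin_toMatrix]
  have hf : ∀ j, f (B j) = ∑ i, (Matrix.fromBlocks (jordanBlock x 2) 0 0
      (Matrix.fromBlocks (jordanBlock 1 1) 0 0 (jordanBlock (x ^ 2)⁻¹ 1))) i j • B i := by
    intro j; rw [hfB, Matrix.toLin_self]
  have hf0 : f (B (Sum.inl 0)) = x • B (Sum.inl 0) := by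
    rw [hf]
    simp [Fintype.sum_sum_type, Fin.sum_univ_two, Fin.sum_univ_one, jordanBlock]
  have hf1 : f (B (Sum.inl 1)) = B (Sum.inl 0) + x • B (Sum.inl 1) := by
    rw [hf]
    simp [Fintype.sum_sum_type, Fin.sum_univ_two, Fin.sum_univ_one, jordanBlock]
  have hf2 : f (B (Sum.inr (Sum.inl 0))) = B (Sum.inr (Sum.inl 0)) := by
    rw [hf]
    simp [Fintype.sum_sum_type, Fin.sum_univ_two, Fin.sum_univ_one, jordanBlock]
  have hf3 : f (B (Sum.inr (Sum.inr 0))) = (x ^ 2)⁻¹ • B (Sum.inr (Sum.inr 0)) := by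
    rw [hf]
    simp [Fintype.sum_sum_type, Fin.sum_univ_two, Fin.sum_univ_one, jordanBlock]
  -- the candidate basis of the exterior square
  set Cv : (Fin 2 ⊕ (Fin 2 ⊕ (Fin 1 ⊕ Fin 1))) → ⋀[ℂ]^2 V :=
    Sum.elim
      ![wedge (B (Sum.inl 0)) (B (Sum.inr (Sum.inl 0))),
        wedge (B (Sum.inl 1)) (B (Sum.inr (Sum.inl 0)))]
      (Sum.elim
        ![wedge (B (Sum.inl 0)) (B (Sum.inr (Sum.inr 0))),
          x ^ 2 • wedge (B (Sum.inl 1)) (B (Sum.inr (Sum.inr 0)))]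
        (Sum.elim
          ![wedge (B (Sum.inl 0)) (B (Sum.inl 1))]
          ![wedge (B (Sum.inr (Sum.inl 0))) (B (Sum.inr (Sum.inr 0)))])) with hCv
  have hco : ∀ a i : (Fin 2 ⊕ (Fin 1 ⊕ Fin 1)), B.coord a (B i) = if a = i then 1 else 0 := by
    intro a i
    rw [Module.Basis.coord_apply, Module.Basis.repr_self, Finsupp.single_apply]
    simp [eq_comm]
  have key : ∀ a b i j : (Fin 2 ⊕ (Fin 1 ⊕ Fin 1)),
      ESJ.lam (B.coord a) (B.coord b) (wedge (B i) (B j)) =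
        (if a = i then 1 else 0) * (if b = j then 1 else 0) -
          (if a = j then 1 else 0) * (if b = i then 1 else 0) := by
    intro a b i j
    rw [ESJ.lam_wedge, hco, hco, hco, hco]
  have hLI : LinearIndependent ℂ Cv := by
    rw [Fintype.linearIndependent_iff]
    intro c hc
    have H : ∀ a b : (Fin 2 ⊕ (Fin 1 ⊕ Fin 1)),
        ∑ k, c k • ESJ.lam (B.coord a) (B.coord b) (Cv k) = 0 := by
      intro a b
      have h2 := congrArg (ESJ.lam (B.coord a) (B.coord b)) hc
      rw [map_sum] at h2
      simpa [map_smul] using h2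
    have H02 := H (Sum.inl 0) (Sum.inr (Sum.inl 0))
    have H12 := H (Sum.inl 1) (Sum.inr (Sum.inl 0))
    have H03 := H (Sum.inl 0) (Sum.inr (Sum.inr 0))
    have H13 := H (Sum.inl 1) (Sum.inr (Sum.inr 0))
    have H01 := H (Sum.inl 0) (Sum.inl 1)
    have H23 := H (Sum.inr (Sum.inl 0)) (Sum.inr (Sum.inr 0))
    simp only [hCv, Fintype.sum_sum_type, Fin.sum_univ_two, Fin.sum_univ_one,
      Sum.elim_inl, Sum.elim_inr, Matrix.cons_val_zero, Matrix.cons_val_one, Matrix.head_cons,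
      map_smul, key, reduceCtorEq, Sum.inl.injEq, Sum.inr.injEq, if_true, if_false,
      ite_true, ite_false, smul_eq_mul] at H02 H12 H03 H13 H01 H23
    norm_num at H02 H12 H03 H13 H01 H23
    intro k
    rcases k with (k | k | k) <;> fin_cases k
    · exact H02
    · exact H12
    · exact H03
    · exact H13.resolve_right hx
    · exact H01
    · exact H23
  -- spanning
  set S := Submodule.span ℂ (Set.range Cv) with hS
  have mem02 : wedge (B (Sum.inl 0)) (B (Sum.inr (Sum.inl 0))) ∈ S :=
    Submodule.subset_span ⟨Sum.inl 0, rfl⟩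
  have mem12 : wedge (B (Sum.inl 1)) (B (Sum.inr (Sum.inl 0))) ∈ S :=
    Submodule.subset_span ⟨Sum.inl 1, rfl⟩
  have mem03 : wedge (B (Sum.inl 0)) (B (Sum.inr (Sum.inr 0))) ∈ S :=
    Submodule.subset_span ⟨Sum.inr (Sum.inl 0), rfl⟩
  have mem13 : wedge (B (Sum.inl 1)) (B (Sum.inr (Sum.inr 0))) ∈ S := by
    have h1 : wedge (B (Sum.inl 1)) (B (Sum.inr (Sum.inr 0))) =
        (x ^ 2)⁻¹ • Cv (Sum.inr (Sum.inl 1)) := by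
      simp only [hCv, Sum.elim_inr, Sum.elim_inl, Matrix.cons_val_one, Matrix.head_cons,
        Matrix.cons_val_zero]
      rw [smul_smul, inv_mul_cancel₀ hx2, one_smul]
    rw [h1]
    exact Submodule.smul_mem _ _ (Submodule.subset_span ⟨Sum.inr (Sum.inl 1), rfl⟩)
  have mem01 : wedge (B (Sum.inl 0)) (B (Sum.inl 1)) ∈ S :=
    Submodule.subset_span ⟨Sum.inr (Sum.inr (Sum.inl 0)), rfl⟩
  have mem23 : wedge (B (Sum.inr (Sum.inl 0))) (B (Sum.inr (Sum.inr 0))) ∈ S :=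
    Submodule.subset_span ⟨Sum.inr (Sum.inr (Sum.inr 0)), rfl⟩
  have hbase : ∀ i j : (Fin 2 ⊕ (Fin 1 ⊕ Fin 1)), wedge (B i) (B j) ∈ S := by
    intro i j
    rcases i with (i | i | i) <;> rcases j with (j | j | j) <;> fin_cases i <;> fin_cases j <;>
      first
        | exact mem01 | exact mem02 | exact mem03 | exact mem12 | exact mem13 | exact mem23
        | (rw [ESJ.wedge_self]; exact zero_mem _)
        | (rw [ESJ.wedge_swap]
           first
             | exact neg_mem mem01 | exact neg_mem mem02 | exact neg_mem mem03
             | exact neg_mem mem12 | exact neg_mem mem13 | exact neg_mem mem23)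
  have hmem : ∀ v w : V, wedge v w ∈ S := by
    intro v w
    have expand : wedge v w = ∑ i, ∑ j, (B.repr v i * B.repr w j) • wedge (B i) (B j) := by
      calc wedge v w = ESJ.W v w := rfl
        _ = ESJ.W (∑ i, B.repr v i • B i) (∑ j, B.repr w j • B j) := by
            rw [B.sum_repr, B.sum_repr]
        _ = ∑ i, ∑ j, (B.repr v i * B.repr w j) • wedge (B i) (B j) := by
            simp only [map_sum, LinearMap.sum_apply, map_smul, LinearMap.smul_apply,
              Finset.smul_sum, smul_smul, ESJ.W_apply]
            rw [Finset.sum_comm]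
            simp only [mul_comm]
    rw [expand]
    exact Submodule.sum_mem _ fun i _ => Submodule.sum_mem _ fun j _ =>
      Submodule.smul_mem _ _ (hbase i j)
  have hspan : ⊤ ≤ S := by
    intro z _
    have hz : (z : ExteriorAlgebra ℂ V) ∈
        Submodule.span ℂ (Set.range (ExteriorAlgebra.ιMulti ℂ 2 (M := V))) := by
      rw [ExteriorAlgebra.ιMulti_span_fixedDegree]; exact z.2
    have hle : Submodule.span ℂ (Set.range (ExteriorAlgebra.ιMulti ℂ 2 (M := V))) ≤
        S.map (⋀[ℂ]^2 V).subtype := by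
      rw [Submodule.span_le]
      rintro _ ⟨v, rfl⟩
      refine ⟨wedge (v 0) (v 1), hmem _ _, ?_⟩
      have hv : v = ![v 0, v 1] := by
        funext i; fin_cases i <;> rfl
      show (wedge (v 0) (v 1) : ExteriorAlgebra ℂ V) = _
      rw [ESJ.wedge_val, ← ESJ.ιMulti_two, ← hv]
    obtain ⟨y, hy, hyz⟩ := hle hz
    have : y = z := Subtype.ext hyz
    exact this ▸ hy
  -- the basis and the matrix computation
  refine ⟨Module.Basis.mk hLI hspan, ?_⟩
  have hgC : g = Matrix.toLin (Module.Basis.mk hLI hspan) (Module.Basis.mk hLI hspan)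
      (Matrix.fromBlocks (jordanBlock x 2) 0 0
        (Matrix.fromBlocks (jordanBlock x⁻¹ 2) 0 0
          (Matrix.fromBlocks (jordanBlock (x ^ 2) 1) 0 0 (jordanBlock (x ^ 2)⁻¹ 1)))) := by
    apply (Module.Basis.mk hLI hspan).ext
    intro k
    rw [Matrix.toLin_self]
    rcases k with (k | k | k | k) <;> fin_cases k <;>
    · simp only [Fin.zero_eta, Fin.mk_one, Fin.isValue, Fintype.sum_sum_type,
        Fin.sum_univ_two, Fin.sum_univ_one, Module.Basis.mk_apply,
        hCv, Sum.elim_inl, Sum.elim_inr, Matrix.cons_val_zero, Matrix.cons_val_one,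
        Matrix.head_cons,
        Matrix.fromBlocks_apply₁₁, Matrix.fromBlocks_apply₁₂, Matrix.fromBlocks_apply₂₁,
        Matrix.fromBlocks_apply₂₂, Matrix.zero_apply,
        ESJ.jb200, ESJ.jb201, ESJ.jb210, ESJ.jb211, ESJ.jb100,
        zero_smul, one_smul, add_zero, zero_add, smul_zero,
        map_smul, hg, hf0, hf1, hf2, hf3,
        ESJ.wedge_add_left, ESJ.wedge_add_right, ESJ.wedge_smul_left, ESJ.wedge_smul_right,
        ESJ.wedge_self, smul_smul]
      try (match_scalars <;> field_simp <;> try ring)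
  rw [hgC, LinearMap.toMatrix_toLin]
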